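/- Let p be a prime and P a finite p-group. For i ≥ 0 let Z_i(P) denote the i-th term of the upper central series of P (Z_0 = 1, Z_{i+1}/Z_i = Z(P/Z_i)), so that with P_1 = P and P_{i+1} = P_i/Z(P_i) one has P_i = P/Z_{i-1}(P) and Z(P_i) = Z_i(P)/Z_{i-1}(P). If for every i ≥ 0 the automorphism group Aut(Z_{i+1}(P)/Z_i(P)) is a p-group, then Aut(P) is a p-group. (Corollary 4.2.) -/

import Mathlib

open Subgroup QuotientGroup

section AutAux

variable {p : ℕ}

/-- Transport of centers along a group isomorphism. -/
def MulEquiv.centerCongr' {G H : Type*} [Group G] [Group H] (e : G ≃* H) :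
    Subgroup.center G ≃* Subgroup.center H where
  toFun z := ⟨e z, Subgroup.mem_center_iff.2 fun g => by
    simpa [map_mul] using congrArg e (Subgroup.mem_center_iff.1 z.2 (e.symm g))⟩
  invFun z := ⟨e.symm z, Subgroup.mem_center_iff.2 fun g => by
    simpa [map_mul] using congrArg e.symm (Subgroup.mem_center_iff.1 z.2 (e g))⟩
  left_inv z := by ext; simp
  right_inv z := by ext; simp
  map_mul' a b := by ext; simp

/-- Restriction of automorphisms to the center. -/
def autCenterHom (G : Type*) [Group G] : MulAut G →* MulAut (Subgroup.center G) where
  toFun φ := MulEquiv.centerCongr' φ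
  map_one' := by ext x; rfl
  map_mul' φ ψ := by ext x; rfl

/-- Induced automorphisms on the central quotient. -/
def autQuotHom (G : Type*) [Group G] : MulAut G →* MulAut (G ⧸ Subgroup.center G) where
  toFun φ := QuotientGroup.congr (Subgroup.center G) (Subgroup.center G) φ
      (Subgroup.characteristic_iff_map_eq.mp inferInstance φ)
  map_one' := by
    ext x
    induction x using QuotientGroup.induction_on with
    | H x => rfl
  map_mul' φ ψ := by
    ext x
    induction x using QuotientGroup.induction_on with
    | H x => rfl

lemma isPGroup_of_ker {G H : Type*} [Group G] [Group H] (f : G →* H)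
    (h1 : IsPGroup p H) (h2 : IsPGroup p f.ker) : IsPGroup p G := by
  have := IsPGroup.comap_of_ker_isPGroup (H := (⊤ : Subgroup H)) (h1.to_subgroup ⊤) f h2
  rw [Subgroup.comap_top] at this
  exact this.of_equiv Subgroup.topEquiv

lemma isPGroup_prod {G H : Type*} [Group G] [Group H]
    (h1 : IsPGroup p G) (h2 : IsPGroup p H) : IsPGroup p (G × H) := by
  intro g
  obtain ⟨j, hj⟩ := h1 g.1
  obtain ⟨k, hk⟩ := h2 g.2
  refine ⟨j + k, ?_⟩
  rw [Prod.pow_def]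
  ext
  · simp [pow_add, pow_mul, hj]
  · simp [pow_add, mul_comm (p ^ j), pow_mul, hk]

/-- An automorphism acting trivially on the center and on the central quotient has order
dividing any exponent of the center. -/
lemma aut_pow_eq_one_of_central {G : Type*} [Group G] {φ : MulAut G}
    (hq : ∀ x : G, x⁻¹ * φ x ∈ Subgroup.center G)
    (hc : ∀ z ∈ Subgroup.center G, φ z = z)
    {m : ℕ} (hm : ∀ z : Subgroup.center G, z ^ m = 1) : φ ^ m = 1 := by
  have key : ∀ (k : ℕ) (x : G), (φ ^ k) x = x * (x⁻¹ * φ x) ^ k := by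
    intro k
    induction k with
    | zero => intro x; simp
    | succ k ih =>
      intro x
      have hmem : (x⁻¹ * φ x) ^ k ∈ Subgroup.center G := pow_mem (hq x) k
      rw [pow_succ', MulAut.mul_apply, ih x, map_mul, hc _ hmem, pow_succ',
        ← mul_assoc, mul_inv_cancel_left]
  ext x
  have := hm ⟨x⁻¹ * φ x, hq x⟩
  have hcoe : (x⁻¹ * φ x) ^ m = 1 := by
    simpa [Subtype.ext_iff] using this
  simp [key m x, hcoe]

universe u

theorem aut_isPGroup_aux (p : ℕ) [Fact p.Prime] :
    ∀ (n : ℕ) (P : Type u) [Group P] [Finite P], Nat.card P ≤ n →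
      IsPGroup p P →
      (∀ i : ℕ, IsPGroup p (MulAut ↥(Subgroup.center (P ⧸ Subgroup.upperCentralSeries P i)))) →
      IsPGroup p (MulAut P) := by
  intro n
  induction n with
  | zero =>
    intro P _ _ hcard _ _
    exact absurd hcard (by have := Nat.card_pos (α := P); omega)
  | succ n ih =>
    intro P _ _ hcard hP h
    rcases subsingleton_or_nontrivial P with hs | hnt
    · intro φ
      exact ⟨0, by ext x; exact Subsingleton.elim _ _⟩
    · haveI : Nontrivial (Subgroup.center P) := hP.center_nontrivial
      -- the quotient by the center is smaller
      have hfac := Subgroup.card_eq_card_quotient_mul_card_subgroup (Subgroup.center P)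
      have h2 : 1 < Nat.card (Subgroup.center P) :=
        Finite.one_lt_card
      have hq1 : 0 < Nat.card (P ⧸ Subgroup.center P) := Nat.card_pos
      have hqcard : Nat.card (P ⧸ Subgroup.center P) ≤ n := by
        have : Nat.card (P ⧸ Subgroup.center P) * 2 ≤
            Nat.card (P ⧸ Subgroup.center P) * Nat.card (Subgroup.center P) :=
          Nat.mul_le_mul_left _ h2
        omega
      -- the induced hypothesis on the quotient
      have hquot : ∀ i : ℕ, IsPGroup p
          (MulAut ↥(Subgroup.center ((P ⧸ Subgroup.center P) ⧸
            Subgroup.upperCentralSeries (P ⧸ Subgroup.center P) i))) := by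
        intro i
        have hle : Subgroup.center P ≤ Subgroup.upperCentralSeries P (i + 1) := by
          rw [← Subgroup.upperCentralSeries_one P]
          exact Subgroup.upperCentralSeries_mono P (by omega)
        have hmap : Subgroup.map (QuotientGroup.mk' (Subgroup.center P))
            (Subgroup.upperCentralSeries P (i + 1)) =
            Subgroup.upperCentralSeries (P ⧸ Subgroup.center P) i := by
          rw [← Subgroup.comap_upperCentralSeries_quotient_center i,
            Subgroup.map_comap_eq_self_of_surjective (QuotientGroup.mk'_surjective _)]
        have e : ((P ⧸ Subgroup.center P) ⧸ Subgroup.upperCentralSeries (P ⧸ Subgroup.center P) i) ≃*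
            (P ⧸ Subgroup.upperCentralSeries P (i + 1)) :=
          (QuotientGroup.quotientMulEquivOfEq hmap.symm).trans
            (QuotientGroup.quotientQuotientEquivQuotient _ _ hle)
        exact (h (i + 1)).of_equiv (MulAut.congr (MulEquiv.centerCongr' e.symm))
      -- Aut of the quotient and of the center are p-groups
      have hAutQ : IsPGroup p (MulAut (P ⧸ Subgroup.center P)) :=
        ih (P ⧸ Subgroup.center P) hqcard (hP.to_quotient _) hquot
      have hAutZ : IsPGroup p (MulAut (Subgroup.center P)) := by
        have e0 : (P ⧸ Subgroup.upperCentralSeries P 0) ≃* P :=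
          (QuotientGroup.quotientMulEquivOfEq (Subgroup.upperCentralSeries_zero P)).trans
            (QuotientGroup.quotientBot)
        exact (h 0).of_equiv (MulAut.congr (MulEquiv.centerCongr' e0))
      -- combine via the restriction homomorphisms
      set F : MulAut P →* MulAut (P ⧸ Subgroup.center P) × MulAut (Subgroup.center P) :=
        (autQuotHom P).prod (autCenterHom P) with hF
      have hker : IsPGroup p F.ker := by
        obtain ⟨m, hm⟩ := IsPGroup.iff_card.1 (hP.to_subgroup (Subgroup.center P))
        intro ⟨φ, hφ⟩
        refine ⟨m, ?_⟩
        rw [Subtype.ext_iff, Subgroup.coe_pow, Subgroup.coe_one]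
        have hφ1 : autQuotHom P φ = 1 := congrArg Prod.fst (MonoidHom.mem_ker.1 hφ)
        have hφ2 : autCenterHom P φ = 1 := congrArg Prod.snd (MonoidHom.mem_ker.1 hφ)
        apply aut_pow_eq_one_of_central (m := p ^ m)
        · intro x
          have : (autQuotHom P φ) (QuotientGroup.mk x) = QuotientGroup.mk x := by
            rw [hφ1]; rfl
          have hx : (QuotientGroup.mk (φ x) : P ⧸ Subgroup.center P) = QuotientGroup.mk x :=
            this
          rw [eq_comm, QuotientGroup.eq] at hx
          exact hx
        · intro z hz
          have := congrArg (fun ψ : MulAut (Subgroup.center P) => ((ψ ⟨z, hz⟩ : Subgroup.center P) : P)) hφ2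
          simpa [autCenterHom, MulEquiv.centerCongr'] using this
        · intro z
          rw [← hm]
          exact pow_card_eq_one'
      exact isPGroup_of_ker F (isPGroup_prod hAutQ hAutZ) hker

end AutAux

/-- **Corollary 4.2.** Let `p` be a prime and `P` a finite `p`-group.  With
`P₁ = P`, `P_{i+1} = P_i/Z(P_i)`, one has `P_{i+1} = P/Z_i(P)` where `Z_i(P)` is the
upper central series, and `Z(P_{i+1}) = Z_{i+1}(P)/Z_i(P)`.  If for every `i ≥ 0` the
automorphism group `Aut(Z_{i+1}(P)/Z_i(P)) = Aut(Z(P/Z_i(P)))` is a `p`-group, then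
`Aut(P)` is a `p`-group. -/
theorem aut_is_pGroup_of_aut_upper_central_quotients (p : ℕ) [Fact p.Prime]
    {P : Type*} [Group P] [Finite P] (hP : IsPGroup p P)
    (h : ∀ i : ℕ, IsPGroup p (MulAut ↥(Subgroup.center (P ⧸ Subgroup.upperCentralSeries P i)))) :
    IsPGroup p (MulAut P) := by
  exact aut_isPGroup_aux p (Nat.card P) P le_rfl hP h
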